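/- Let Π, Π̂ ∈ ℝ^{n×n}, w ∈ ℝⁿ, ε > 0, and let φ : ℝⁿ → ℝ be differentiable. Suppose Π Π̂ᵀ + Π̂ Πᵀ is positive definite, and let u : ℝ → ℝⁿ be a differentiable solution of u̇(t) = −ε Π̂ᵀ ∇φ(Πu(t) + w). Then on any interval on which ∇φ(Πu(t) + w) ≠ 0, the function t ↦ φ(Πu(t) + w) is strictly decreasing. -/

import Mathlib

open Matrix Filter

/-- If `Π Π̂ᵀ + Π̂ Πᵀ ≻ 0` then along any solution of the OAG dynamics,
the cost `t ↦ φ(Πu(t) + w)` is strictly decreasing on any interval on which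
`∇φ(Πu(t) + w) ≠ 0`. -/
theorem stmt2 {n : ℕ} (P Phat : Matrix (Fin n) (Fin n) ℝ)
    (w : EuclideanSpace ℝ (Fin n)) (ε : ℝ) (hε : 0 < ε)
    (φ : EuclideanSpace ℝ (Fin n) → ℝ)
    (hdiff : Differentiable ℝ φ)
    (hpd : (P * Phat.transpose + Phat * P.transpose).PosDef)
    (u : ℝ → EuclideanSpace ℝ (Fin n))
    (hu : ∀ t : ℝ, HasDerivAt u
        (-(ε • Matrix.toEuclideanLin Phat.transpose
            (gradient φ (Matrix.toEuclideanLin P (u t) + w)))) t) :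
    ∀ s : Set ℝ, s.OrdConnected →
      (∀ t ∈ s, gradient φ (Matrix.toEuclideanLin P (u t) + w) ≠ 0) →
      StrictAntiOn (fun t => φ (Matrix.toEuclideanLin P (u t) + w)) s := by
  intro s hs hgrad
  set y : ℝ → EuclideanSpace ℝ (Fin n) := fun t => Matrix.toEuclideanLin P (u t) + w with hy
  set g : ℝ → EuclideanSpace ℝ (Fin n) := fun t => gradient φ (y t) with hg
  -- continuous linear map version of toEuclideanLin P
  let L : EuclideanSpace ℝ (Fin n) →L[ℝ] EuclideanSpace ℝ (Fin n) :=
    LinearMap.toContinuousLinearMap (Matrix.toEuclideanLin P)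
  have hyderiv : ∀ t, HasDerivAt y (L (-(ε • Matrix.toEuclideanLin Phat.transpose (g t)))) t := by
    intro t
    exact ((L.hasFDerivAt.comp_hasDerivAt t (hu t)).add_const w)
  have hfd : ∀ t, HasDerivAt (fun t => φ (y t))
      (inner ℝ (g t) (L (-(ε • Matrix.toEuclideanLin Phat.transpose (g t)))) : _) t := by
    intro t
    have h1 := ((hdiff (y t)).hasGradientAt.hasFDerivAt).comp_hasDerivAt t (hyderiv t)
    simp [hg, gradient, InnerProductSpace.toDual_symm_apply, real_inner_smul_right] at h1 ⊢
    exact h1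
  -- the derivative value is negative whenever the gradient is nonzero
  have hneg : ∀ t, g t ≠ 0 →
      (inner ℝ (g t) (L (-(ε • Matrix.toEuclideanLin Phat.transpose (g t)))) : ℝ) < 0 := by
    intro t hgt
    set x : Fin n → ℝ := (WithLp.equiv 2 (Fin n → ℝ)) (g t) with hx
    have hx0 : x ≠ 0 := fun h => hgt ((WithLp.equiv 2 (Fin n → ℝ)).injective (by rw [← hx, h]; simp))
    have hpos : 0 < x ⬝ᵥ ((P * Phat.transpose) *ᵥ x) := by
      have h2 := (posDef_iff_dotProduct_mulVec.mp hpd).2 hx0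
      have hsym : x ⬝ᵥ ((Phat * P.transpose) *ᵥ x) = x ⬝ᵥ ((P * Phat.transpose) *ᵥ x) := by
        rw [dotProduct_mulVec, dotProduct_mulVec]
        rw [show (Phat * P.transpose) = (P * Phat.transpose).transpose by simp [Matrix.transpose_mul]]
        rw [vecMul_transpose, ← dotProduct_mulVec, dotProduct_comm, dotProduct_mulVec]
      simp only [star_trivial, add_mulVec, dotProduct_add, hsym] at h2
      linarith
    have hinner : (inner ℝ (g t) (L (-(ε • Matrix.toEuclideanLin Phat.transpose (g t)))) : ℝ)
        = -(ε * (x ⬝ᵥ ((P * Phat.transpose) *ᵥ x))) := by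
      simp only [L, LinearMap.coe_toContinuousLinearMap']
      rw [EuclideanSpace.inner_eq_star_dotProduct]
      simp [hx, Matrix.mulVec_mulVec, dotProduct_smul, dotProduct_neg, dotProduct_comm,
        smul_eq_mul, Matrix.mulVec_smul, Matrix.mulVec_neg]
    rw [hinner]
    nlinarith
  refine strictAntiOn_of_deriv_neg hs.convex
    (fun t _ => (hfd t).continuousAt.continuousWithinAt) ?_
  intro t ht
  rw [(hfd t).deriv]
  exact hneg t (hgrad t (interior_subset ht))
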